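/- Let ψ₀ ∈ L¹(ℝ,ℂ) with ∫_ℝ y²|ψ₀(y)|dy < ∞, and let ρ(x,t) = |ψ(x,t)|² where ψ(x,t) = (2πit)^{−1/2} ∫_ℝ e^{i(x−y)²/(2t)} ψ₀(y) dy. Then for all x ∈ ℝ, T > 0, t ≥ 1: |ρ(x, tT) − (1/t)ρ(x/t, T)| ≤ (√2/(π t T²)) (∫_ℝ y²|ψ₀(y)|dy)(∫_ℝ |ψ₀(y)|dy). -/

import Mathlib

set_option maxHeartbeats 800000

open MeasureTheory Complex

lemma norm_exp_I_sub_one_le (θ : ℝ) : ‖Complex.exp ((θ:ℂ) * I) - 1‖ ≤ 2 * |θ| := by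
  rcases le_or_gt (|θ|) 1 with h | h
  · have := Complex.norm_exp_sub_one_le (x := (θ:ℂ) * I) (by simpa using h)
    simpa using this
  · have h1 : ‖Complex.exp ((θ:ℂ) * I) - 1‖ ≤ ‖Complex.exp ((θ:ℂ)*I)‖ + ‖(1:ℂ)‖ :=
      norm_sub_le _ _
    have h2 : ‖Complex.exp ((θ:ℂ)*I)‖ = 1 := by
      simpa using Complex.norm_exp_ofReal_mul_I θ
    simp only [h2, norm_one] at h1
    linarith

/-- The asymptotic space-time dilation property: for `ψ₀ ∈ L¹(ℝ,ℂ)` with finite second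
absolute moment and `ρ(x,t) = |ψ(x,t)|²`, where
`ψ(x,t) = (2πit)^{−1/2} ∫ e^{i(x−y)²/(2t)} ψ₀(y) dy`, for all `x ∈ ℝ`, `T > 0`, `t ≥ 1`:
`|ρ(x, tT) − (1/t)ρ(x/t, T)| ≤ (√2/(π t T²)) (∫ y²|ψ₀|)(∫ |ψ₀|)`. -/
theorem schrodinger_space_time_dilation
    (ψ₀ : ℝ → ℂ) (hψ₀ : Integrable ψ₀)
    (hmom : Integrable (fun y : ℝ => y ^ 2 * ‖ψ₀ y‖))
    (ψ : ℝ → ℝ → ℂ)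
    (hψ : ∀ x t : ℝ, ψ x t = ((2 * (Real.pi : ℂ) * Complex.I * (t : ℂ)) ^ (-(1 / 2) : ℂ)) *
      ∫ y : ℝ, Complex.exp (Complex.I * ((x : ℂ) - (y : ℂ)) ^ 2 / (2 * (t : ℂ))) * ψ₀ y)
    (ρ : ℝ → ℝ → ℝ) (hρ : ∀ x t : ℝ, ρ x t = ‖ψ x t‖ ^ 2)
    (x T t : ℝ) (hT : 0 < T) (ht : 1 ≤ t) :
    |ρ x (t * T) - (1 / t) * ρ (x / t) T| ≤
      (Real.sqrt 2 / (Real.pi * t * T ^ 2)) *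
        (∫ y : ℝ, y ^ 2 * ‖ψ₀ y‖) * (∫ y : ℝ, ‖ψ₀ y‖) := by
  have ht0 : (0:ℝ) < t := lt_of_lt_of_le one_pos ht
  set M2 := ∫ y : ℝ, y ^ 2 * ‖ψ₀ y‖ with hM2def
  set M0 := ∫ y : ℝ, ‖ψ₀ y‖ with hM0def
  have hM2 : 0 ≤ M2 := integral_nonneg fun y => by positivity
  have hM0 : 0 ≤ M0 := integral_nonneg fun y => norm_nonneg _
  set F : ℝ → ℝ → ℂ := fun x s =>
    ∫ y : ℝ, Complex.exp (Complex.I * ((x : ℂ) - (y : ℂ)) ^ 2 / (2 * (s : ℂ))) * ψ₀ y with hF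
  -- ρ in terms of F
  have hρF : ∀ (x s : ℝ), 0 < s → ρ x s = (2*Real.pi*s)⁻¹ * ‖F x s‖^2 := by
    intro x s hs
    have hz : (2*(Real.pi:ℂ)*I*(s:ℂ)) ≠ 0 := by
      apply mul_ne_zero (mul_ne_zero (mul_ne_zero two_ne_zero _) I_ne_zero)
      · exact_mod_cast hs.ne'
      · exact_mod_cast Real.pi_ne_zero
    have habs : ‖(2*(Real.pi:ℂ)*I*(s:ℂ))‖ = 2*Real.pi*s := by
      simp [abs_of_pos hs,
        abs_of_pos Real.pi_pos]
    have hw : (-(1/2) : ℂ) = ((-(1/2) : ℝ) : ℂ) := by norm_num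
    have hn : ‖(2*(Real.pi:ℂ)*I*(s:ℂ)) ^ (-(1/2) : ℂ)‖ = (2*Real.pi*s) ^ (-(1/2) : ℝ) := by
      rw [hw, Complex.norm_cpow_of_ne_zero hz, habs]
      simp
    rw [hρ, hψ, norm_mul, hn, mul_pow,
      ← Real.rpow_natCast ((2*Real.pi*s) ^ (-(1/2) : ℝ)) 2,
      ← Real.rpow_mul (by positivity)]
    norm_num [Real.rpow_neg_one]
    exact Or.inl rfl
  -- integrability of phase-modulated ψ₀
  have hint : ∀ (g : ℝ → ℝ), Continuous g →
      Integrable (fun y : ℝ => Complex.exp ((g y : ℂ) * I) * ψ₀ y) := by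
    intro g hg
    refine hψ₀.bdd_mul (c := 1) ?_ (Filter.Eventually.of_forall fun y => ?_)
    · exact (Complex.continuous_exp.comp ((Complex.continuous_ofReal.comp hg).mul
        continuous_const)).aestronglyMeasurable
    · simpa using (Complex.norm_exp_ofReal_mul_I (g y)).le
  -- phase functions
  set φA : ℝ → ℝ := fun y => (x - y)^2 / (2*(t*T)) with hφA
  set φB : ℝ → ℝ := fun y => (x/t - y)^2 / (2*T) with hφB
  set c : ℝ := x^2/(2*t*T) - x^2/(2*t^2*T) with hc
  have hφAc : Continuous φA := by fun_prop
  have hφBc : Continuous φB := by fun_prop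
  have hA : F x (t*T) = ∫ y : ℝ, Complex.exp ((φA y : ℂ) * I) * ψ₀ y := by
    have harg : ∀ y : ℝ, Complex.I * ((x : ℂ) - (y : ℂ)) ^ 2 / (2 * ((t*T : ℝ) : ℂ))
        = ((φA y : ℂ)) * I := by
      intro y
      simp only [hφA]
      push_cast
      ring
    rw [hF]
    exact integral_congr_ae (Filter.Eventually.of_forall fun y => by beta_reduce; rw [harg y])
  have hB : F (x/t) T = ∫ y : ℝ, Complex.exp ((φB y : ℂ) * I) * ψ₀ y := by
    have harg : ∀ y : ℝ, Complex.I * (((x/t : ℝ) : ℂ) - (y : ℂ)) ^ 2 / (2 * ((T : ℝ) : ℂ))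
        = ((φB y : ℂ)) * I := by
      intro y
      simp only [hφB]
      push_cast
      ring
    rw [hF]
    exact integral_congr_ae (Filter.Eventually.of_forall fun y => by beta_reduce; rw [harg y])
  -- norms of A and B bounded by M0
  have hnormF : ∀ (g : ℝ → ℝ), ‖∫ y : ℝ, Complex.exp ((g y : ℂ) * I) * ψ₀ y‖ ≤ M0 := by
    intro g
    calc ‖∫ y : ℝ, Complex.exp ((g y : ℂ) * I) * ψ₀ y‖
        ≤ ∫ y : ℝ, ‖Complex.exp ((g y : ℂ) * I) * ψ₀ y‖ := norm_integral_le_integral_norm _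
      _ = M0 := by
          rw [hM0def]
          congr 1
          funext y
          rw [norm_mul]
          simp [Complex.norm_exp_ofReal_mul_I]
  -- the key difference bound
  have key : F x (t*T) - Complex.exp ((c:ℂ)*I) * F (x/t) T
      = ∫ y : ℝ, (Complex.exp ((φA y : ℂ) * I)
          - Complex.exp (((φB y + c : ℝ) : ℂ) * I)) * ψ₀ y := by
    have hexp : ∀ y : ℝ, Complex.exp ((c:ℂ)*I) * Complex.exp ((φB y : ℂ) * I)
        = Complex.exp (((φB y + c : ℝ) : ℂ) * I) := by
      intro y
      rw [← Complex.exp_add]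
      congr 1
      push_cast
      ring
    rw [hA, hB, ← integral_const_mul,
      ← integral_sub (hint φA hφAc) ((hint φB hφBc).const_mul _)]
    refine integral_congr_ae (Filter.Eventually.of_forall fun y => ?_)
    beta_reduce
    rw [← mul_assoc, hexp y, sub_mul]
  have hdval : ∀ y : ℝ, φA y - (φB y + c) = -(y^2*(t-1)/(2*t*T)) := by
    intro y
    rw [hφA, hφB, hc]
    field_simp
    ring
  have hkeybound : ‖F x (t*T) - Complex.exp ((c:ℂ)*I) * F (x/t) T‖ ≤ (t-1)/(t*T) * M2 := by
    rw [key]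
    calc ‖∫ y : ℝ, (Complex.exp ((φA y : ℂ) * I)
            - Complex.exp (((φB y + c : ℝ) : ℂ) * I)) * ψ₀ y‖
        ≤ ∫ y : ℝ, ‖(Complex.exp ((φA y : ℂ) * I)
            - Complex.exp (((φB y + c : ℝ) : ℂ) * I)) * ψ₀ y‖ :=
          norm_integral_le_integral_norm _
      _ ≤ ∫ y : ℝ, (t-1)/(t*T) * (y^2 * ‖ψ₀ y‖) := by
          apply integral_mono_of_nonneg
          · exact Filter.Eventually.of_forall fun y => norm_nonneg _
          · exact hmom.const_mul _
          · apply Filter.Eventually.of_forall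
            intro y
            beta_reduce
            rw [norm_mul]
            have hsplit : Complex.exp ((φA y : ℂ) * I) - Complex.exp (((φB y + c : ℝ) : ℂ) * I)
                = Complex.exp (((φB y + c : ℝ) : ℂ) * I)
                  * (Complex.exp (((φA y - (φB y + c) : ℝ) : ℂ) * I) - 1) := by
              rw [mul_sub, mul_one, ← Complex.exp_add]
              congr 2
              push_cast
              ring
            rw [hsplit, norm_mul]
            have h1 : ‖Complex.exp (((φB y + c : ℝ) : ℂ) * I)‖ = 1 := by
              simpa using Complex.norm_exp_ofReal_mul_I (φB y + c)
            rw [h1, one_mul]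
            have h2 := norm_exp_I_sub_one_le (φA y - (φB y + c))
            have h3 : |φA y - (φB y + c)| = y^2*(t-1)/(2*t*T) := by
              rw [hdval y, abs_neg]
              exact _root_.abs_of_nonneg (div_nonneg (by nlinarith [sq_nonneg y]) (by positivity))
            calc ‖Complex.exp (((φA y - (φB y + c) : ℝ) : ℂ) * I) - 1‖ * ‖ψ₀ y‖
                ≤ (2 * |φA y - (φB y + c)|) * ‖ψ₀ y‖ :=
                  mul_le_mul_of_nonneg_right h2 (norm_nonneg _)
              _ = (t-1)/(t*T) * (y^2 * ‖ψ₀ y‖) := by rw [h3]; field_simp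
      _ = (t-1)/(t*T) * M2 := by rw [integral_const_mul]
  -- norms comparison
  have hAle : ‖F x (t*T)‖ ≤ M0 := by rw [hA]; exact hnormF φA
  have hBle : ‖F (x/t) T‖ ≤ M0 := by rw [hB]; exact hnormF φB
  have hBnorm : ‖Complex.exp ((c:ℂ)*I) * F (x/t) T‖ = ‖F (x/t) T‖ := by
    rw [norm_mul]
    have : ‖Complex.exp ((c:ℂ)*I)‖ = 1 := by simpa using Complex.norm_exp_ofReal_mul_I c
    rw [this, one_mul]
  have hdiffnorm : |‖F x (t*T)‖ - ‖F (x/t) T‖| ≤ (t-1)/(t*T) * M2 := by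
    calc |‖F x (t*T)‖ - ‖F (x/t) T‖|
        = |‖F x (t*T)‖ - ‖Complex.exp ((c:ℂ)*I) * F (x/t) T‖| := by rw [hBnorm]
      _ ≤ ‖F x (t*T) - Complex.exp ((c:ℂ)*I) * F (x/t) T‖ := abs_norm_sub_norm_le _ _
      _ ≤ (t-1)/(t*T) * M2 := hkeybound
  -- assemble
  have hrw : ρ x (t*T) - (1/t) * ρ (x/t) T
      = (2*Real.pi*(t*T))⁻¹ * (‖F x (t*T)‖^2 - ‖F (x/t) T‖^2) := by
    rw [hρF x (t*T) (mul_pos ht0 hT), hρF (x/t) T hT]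
    field_simp
  have hsq : |‖F x (t*T)‖^2 - ‖F (x/t) T‖^2| ≤ 2*M0 * ((t-1)/(t*T) * M2) := by
    have hfac : ‖F x (t*T)‖^2 - ‖F (x/t) T‖^2
        = (‖F x (t*T)‖ + ‖F (x/t) T‖) * (‖F x (t*T)‖ - ‖F (x/t) T‖) := by ring
    rw [hfac, abs_mul, _root_.abs_of_nonneg (by positivity : (0:ℝ) ≤ ‖F x (t*T)‖ + ‖F (x/t) T‖)]
    apply mul_le_mul (by linarith) hdiffnorm (abs_nonneg _)
    positivity
  rw [hrw, abs_mul, _root_.abs_of_nonneg (by positivity : (0:ℝ) ≤ (2*Real.pi*(t*T))⁻¹)]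
  have step : (2*Real.pi*(t*T))⁻¹ * |‖F x (t*T)‖^2 - ‖F (x/t) T‖^2|
      ≤ (2*Real.pi*(t*T))⁻¹ * (2*M0 * ((t-1)/(t*T) * M2)) :=
    mul_le_mul_of_nonneg_left hsq (by positivity)
  refine step.trans ?_
  have e1 : (2*Real.pi*(t*T))⁻¹ * (2*M0 * ((t-1)/(t*T) * M2))
      = (t-1)/t * (M2*M0/(Real.pi*t*T^2)) := by
    field_simp
  have e2 : Real.sqrt 2/(Real.pi*t*T^2)*M2*M0 = Real.sqrt 2 * (M2*M0/(Real.pi*t*T^2)) := by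
    ring
  rw [e1, e2]
  refine mul_le_mul ?_ le_rfl (div_nonneg (mul_nonneg hM2 hM0) (by positivity))
    (Real.sqrt_nonneg 2)
  have h1 : (t-1)/t ≤ 1 := by
    rw [div_le_one ht0]; linarith
  have h2 : (1:ℝ) ≤ Real.sqrt 2 := by
    rw [show (1:ℝ) = Real.sqrt 1 by simp]
    exact Real.sqrt_le_sqrt (by norm_num)
  linarith
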